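/- Let (P_i)_{i=0}^N be defined backward by P_N = 0 and P_{i} = Γ(P_{i+1}), where Γ(P) = τQ + (I+τA)ᵀP(I+τA) − (I+τA)ᵀPτB(R+τBᵀPB)⁻¹BᵀP(I+τA) and τ = T/N. Then there is a constant C, depending only on T, ‖A‖₂, ‖Q‖₂ (and not on N), such that ‖P_i‖₂ ≤ C for all i = 0,…,N. -/

import Mathlib

open Matrix

/-- The spectral norm (operator norm induced by Euclidean norms) of a real matrix. -/
noncomputable def sNorm {m n : ℕ} (A : Matrix (Fin m) (Fin n) ℝ) : ℝ :=
  ‖LinearMap.toContinuousLinearMap (Matrix.toEuclideanLin A)‖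

/-- The one-step Riccati difference operator. -/
noncomputable def riccatiStep {n d : ℕ} (τ : ℝ) (Q A : Matrix (Fin n) (Fin n) ℝ)
    (R : Matrix (Fin d) (Fin d) ℝ) (B : Matrix (Fin n) (Fin d) ℝ)
    (P : Matrix (Fin n) (Fin n) ℝ) : Matrix (Fin n) (Fin n) ℝ :=
  τ • Q + (1 + τ • A)ᵀ * P * (1 + τ • A)
    - (1 + τ • A)ᵀ * P * (τ • B) * (R + τ • (Bᵀ * P * B))⁻¹ * Bᵀ * P * (1 + τ • A)

set_option maxHeartbeats 1000000

section Helpers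
open scoped Matrix.Norms.L2Operator RealInnerProductSpace

lemma sNorm_eq_norm {m n : ℕ} (A : Matrix (Fin m) (Fin n) ℝ) : sNorm A = ‖A‖ := rfl


variable {n : ℕ}

lemma dot_symm {P : Matrix (Fin n) (Fin n) ℝ} (hP : Pᵀ = P) (a b : Fin n → ℝ) :
    a ⬝ᵥ (P *ᵥ b) = b ⬝ᵥ (P *ᵥ a) := by
  rw [dotProduct_mulVec, ← hP, vecMul_transpose, hP, dotProduct_comm]

lemma clm_apply_eq (M : Matrix (Fin n) (Fin n) ℝ) (v : EuclideanSpace ℝ (Fin n)) :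
    (toEuclideanCLM (𝕜 := ℝ) M) v = (WithLp.equiv 2 _).symm (M *ᵥ (WithLp.equiv 2 _ v)) := by
  apply (WithLp.equiv 2 _).injective
  rfl

lemma inner_eq_dot (u v : EuclideanSpace ℝ (Fin n)) :
    ⟪u, v⟫ = (WithLp.equiv 2 _ u) ⬝ᵥ (WithLp.equiv 2 _ v) := by
  rw [EuclideanSpace.inner_eq_star_dotProduct]
  simp [dotProduct, mul_comm]

lemma norm_le_norm_of_psd_le {X Y : Matrix (Fin n) (Fin n) ℝ}
    (hX : X.PosSemidef) (hYX : (Y - X).PosSemidef) : ‖X‖ ≤ ‖Y‖ := by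
  have hY0 : (0:ℝ) ≤ ‖Y‖ := norm_nonneg _
  obtain ⟨S, hS, hSS⟩ : ∃ S : Matrix (Fin n) (Fin n) ℝ, S.PosSemidef ∧ S * S = X :=
    by open scoped MatrixOrder in exact ⟨CFC.sqrt X, (CFC.sqrt_nonneg X).posSemidef, CFC.sqrt_mul_sqrt_self X hX.nonneg⟩
  have hX2 : X = Sᴴ * S := by rw [hS.1, hSS]
  have hnormX : ‖X‖ = ‖S‖ * ‖S‖ := by
    rw [hX2]; exact l2_opNorm_conjTranspose_mul_self S
  have hSt : Sᵀ = S := by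
    rw [← conjTranspose_eq_transpose_of_trivial]; exact hS.1
  have hSle : ‖S‖ ≤ Real.sqrt ‖Y‖ := by
    rw [cstar_norm_def]
    refine ContinuousLinearMap.opNorm_le_bound _ (Real.sqrt_nonneg _) fun v => ?_
    set v' : Fin n → ℝ := WithLp.equiv 2 _ v with hv'
    have hsq : ‖toEuclideanCLM (𝕜 := ℝ) S v‖ ^ 2 ≤ ‖Y‖ * ‖v‖ ^ 2 := by
      have h1 : ‖toEuclideanCLM (𝕜 := ℝ) S v‖ ^ 2 = v' ⬝ᵥ (X *ᵥ v') := by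
        rw [← real_inner_self_eq_norm_sq, inner_eq_dot, clm_apply_eq,
          Equiv.apply_symm_apply, ← hSS, ← Matrix.mulVec_mulVec]
        rw [dotProduct_mulVec, ← hSt, vecMul_transpose, hSt, Matrix.mulVec_mulVec]
        exact dotProduct_comm _ _
      have h2 : v' ⬝ᵥ (X *ᵥ v') ≤ v' ⬝ᵥ (Y *ᵥ v') := by
        have := hYX.dotProduct_mulVec_nonneg v'
        simp only [star_trivial, sub_mulVec, dotProduct_sub] at this
        linarith
      have h3 : v' ⬝ᵥ (Y *ᵥ v') ≤ ‖Y‖ * ‖v‖ ^ 2 := by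
        have h4 : v' ⬝ᵥ (Y *ᵥ v') = ⟪v, toEuclideanCLM (𝕜 := ℝ) Y v⟫ := by
          rw [inner_eq_dot, clm_apply_eq, Equiv.apply_symm_apply]
        have h5 := real_inner_le_norm v (toEuclideanCLM (𝕜 := ℝ) Y v)
        have h6 := (toEuclideanCLM (𝕜 := ℝ) Y).le_opNorm v
        rw [← cstar_norm_def] at h6
        have hv0 : (0:ℝ) ≤ ‖v‖ := norm_nonneg _
        nlinarith
      linarith
    have := Real.sqrt_le_sqrt hsq
    rw [Real.sqrt_sq (norm_nonneg _), Real.sqrt_mul hY0, Real.sqrt_sq (norm_nonneg _)] at this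
    exact this
  calc ‖X‖ = ‖S‖ * ‖S‖ := hnormX
    _ ≤ Real.sqrt ‖Y‖ * Real.sqrt ‖Y‖ := by
        exact mul_le_mul hSle hSle (norm_nonneg _) (Real.sqrt_nonneg _)
    _ = ‖Y‖ := Real.mul_self_sqrt hY0

lemma psd_smul {n : ℕ} {X : Matrix (Fin n) (Fin n) ℝ} (hX : X.PosSemidef) {c : ℝ} (hc : 0 ≤ c) :
    (c • X).PosSemidef := by
  refine PosSemidef.of_dotProduct_mulVec_nonneg ?_ fun x => ?_
  · unfold Matrix.IsHermitian
    rw [conjTranspose_smul, hX.1]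
    simp
  · rw [smul_mulVec, dotProduct_smul]
    exact mul_nonneg hc (hX.dotProduct_mulVec_nonneg x)

lemma mulVec_dot {a b : ℕ} (B : Matrix (Fin a) (Fin b) ℝ) (u : Fin b → ℝ) (z : Fin a → ℝ) :
    (B *ᵥ u) ⬝ᵥ z = u ⬝ᵥ (Bᵀ *ᵥ z) := by
  rw [dotProduct_mulVec, vecMul_transpose]

lemma transpose_dot {a b : ℕ} (B : Matrix (Fin a) (Fin b) ℝ) (u : Fin b → ℝ) (z : Fin a → ℝ) :
    z ⬝ᵥ (B *ᵥ u) = (Bᵀ *ᵥ z) ⬝ᵥ u := by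
  rw [dotProduct_comm, mulVec_dot, dotProduct_comm]

lemma riccati_psd_and_bound {n d : ℕ} {τ : ℝ} (hτ : 0 < τ)
    {Q A : Matrix (Fin n) (Fin n) ℝ} {R : Matrix (Fin d) (Fin d) ℝ} {B : Matrix (Fin n) (Fin d) ℝ}
    (hQ : Q.PosSemidef) (hR : R.PosDef) {P : Matrix (Fin n) (Fin n) ℝ} (hP : P.PosSemidef) :
    (riccatiStep τ Q A R B P).PosSemidef ∧
      ‖riccatiStep τ Q A R B P‖ ≤ τ * ‖Q‖ + (1 + τ * ‖A‖) ^ 2 * ‖P‖ := by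
  have hPt : Pᵀ = P := by rw [← conjTranspose_eq_transpose_of_trivial]; exact hP.1
  set L : Matrix (Fin n) (Fin n) ℝ := 1 + τ • A with hL
  set S : Matrix (Fin d) (Fin d) ℝ := R + τ • (Bᵀ * P * B) with hSdef
  have hBPB : (Bᵀ * P * B).PosSemidef := by
    have := hP.conjTranspose_mul_mul_same B
    rwa [conjTranspose_eq_transpose_of_trivial] at this
  have hS : S.PosDef := hR.add_posSemidef (psd_smul hBPB hτ.le)
  have hSinv : S * S⁻¹ = 1 := Matrix.mul_nonsing_inv _ (Matrix.isUnit_iff_isUnit_det _ |>.1 hS.isUnit)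
  have hSinvPsd : (S⁻¹).PosSemidef := hS.posSemidef.inv
  set K : Matrix (Fin d) (Fin n) ℝ := Bᵀ * P * L with hK
  set W : Matrix (Fin n) (Fin n) ℝ := τ • (Kᵀ * S⁻¹ * K) with hW
  set Z : Matrix (Fin n) (Fin n) ℝ := τ • Q + Lᵀ * P * L with hZ
  have hKt : Kᴴ = Kᵀ := conjTranspose_eq_transpose_of_trivial K
  have hWpsd : W.PosSemidef := by
    rw [hW, ← hKt]
    exact psd_smul (hSinvPsd.conjTranspose_mul_mul_same K) hτ.le
  have hZpsd : Z.PosSemidef := by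
    refine (psd_smul hQ hτ.le).add ?_
    have := hP.conjTranspose_mul_mul_same L
    rwa [conjTranspose_eq_transpose_of_trivial] at this
  have hId1 : riccatiStep τ Q A R B P = Z - W := by
    rw [riccatiStep, hZ, hW, hK, ← hL, ← hSdef]
    congr 1
    simp only [transpose_mul, transpose_transpose, hPt, Matrix.mul_smul, Matrix.smul_mul, Matrix.mul_assoc]
  -- quadratic form nonnegativity
  have hform : ∀ x : Fin n → ℝ, 0 ≤ x ⬝ᵥ ((Z - W) *ᵥ x) := by
    intro x
    set y : Fin n → ℝ := L *ᵥ x with hy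
    set w : Fin d → ℝ := Bᵀ *ᵥ (P *ᵥ y) with hw
    set u : Fin d → ℝ := S⁻¹ *ᵥ w with hu
    set v : Fin n → ℝ := y - τ • (B *ᵥ u) with hv
    have hSu : S *ᵥ u = w := by
      rw [hu, Matrix.mulVec_mulVec, hSinv, Matrix.one_mulVec]
    have key : x ⬝ᵥ ((Z - W) *ᵥ x)
        = τ * (x ⬝ᵥ (Q *ᵥ x)) + (τ * (u ⬝ᵥ (R *ᵥ u)) + v ⬝ᵥ (P *ᵥ v)) := by
      have e1 : x ⬝ᵥ (Z *ᵥ x) = τ * (x ⬝ᵥ (Q *ᵥ x)) + y ⬝ᵥ (P *ᵥ y) := by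
        rw [hZ, add_mulVec, dotProduct_add, smul_mulVec, dotProduct_smul,
          ← Matrix.mulVec_mulVec, ← Matrix.mulVec_mulVec,
          transpose_dot Lᵀ (P *ᵥ (L *ᵥ x)) x, transpose_transpose, ← hy]
        rfl
      have e2 : x ⬝ᵥ (W *ᵥ x) = τ * (w ⬝ᵥ u) := by
        rw [hW, smul_mulVec, dotProduct_smul, ← Matrix.mulVec_mulVec,
          ← Matrix.mulVec_mulVec, transpose_dot Kᵀ (S⁻¹ *ᵥ (K *ᵥ x)) x, transpose_transpose]
        have hKx : K *ᵥ x = w := by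
          rw [hK, ← Matrix.mulVec_mulVec, ← Matrix.mulVec_mulVec, ← hy, ← hw]
        rw [hKx, ← hu]
        rfl
      have e3 : v ⬝ᵥ (P *ᵥ v)
          = y ⬝ᵥ (P *ᵥ y) - 2 * τ * ((B *ᵥ u) ⬝ᵥ (P *ᵥ y)) + τ * τ * ((B *ᵥ u) ⬝ᵥ (P *ᵥ (B *ᵥ u))) := by
        rw [hv, Matrix.mulVec_sub, Matrix.mulVec_smul, dotProduct_sub, sub_dotProduct,
          sub_dotProduct, dotProduct_smul, smul_dotProduct, dotProduct_smul, smul_dotProduct,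
          dot_symm hPt y (B *ᵥ u)]
        simp only [smul_eq_mul]
        ring
      have e4 : (B *ᵥ u) ⬝ᵥ (P *ᵥ y) = u ⬝ᵥ w := by
        rw [mulVec_dot, hw, Matrix.mulVec_mulVec, Matrix.mulVec_mulVec]
      have e5 : τ * (u ⬝ᵥ (R *ᵥ u)) + τ * τ * ((B *ᵥ u) ⬝ᵥ (P *ᵥ (B *ᵥ u))) = τ * (u ⬝ᵥ w) := by
        have h6 : (B *ᵥ u) ⬝ᵥ (P *ᵥ (B *ᵥ u)) = u ⬝ᵥ ((Bᵀ * P * B) *ᵥ u) := by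
          rw [mulVec_dot, Matrix.mulVec_mulVec, Matrix.mulVec_mulVec]
        have h7 : u ⬝ᵥ (S *ᵥ u) = u ⬝ᵥ (R *ᵥ u) + τ * (u ⬝ᵥ ((Bᵀ * P * B) *ᵥ u)) := by
          rw [hSdef, add_mulVec, dotProduct_add, smul_mulVec, dotProduct_smul]
          rfl
        rw [hSu] at h7
        rw [h6]
        nlinarith [h7]
      have huw : w ⬝ᵥ u = u ⬝ᵥ w := dotProduct_comm _ _
      rw [Matrix.sub_mulVec, dotProduct_sub, e1, e2, e3, e4, huw]
      nlinarith [e5]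
    rw [key]
    have h1 : 0 ≤ x ⬝ᵥ (Q *ᵥ x) := by have := hQ.dotProduct_mulVec_nonneg x; simpa using this
    have h2 : 0 ≤ u ⬝ᵥ (R *ᵥ u) := by have := hR.posSemidef.dotProduct_mulVec_nonneg u; simpa using this
    have h3 : 0 ≤ v ⬝ᵥ (P *ᵥ v) := by have := hP.dotProduct_mulVec_nonneg v; simpa using this
    positivity
  have hgpsd : (riccatiStep τ Q A R B P).PosSemidef := by
    rw [hId1]
    refine PosSemidef.of_dotProduct_mulVec_nonneg (hZpsd.1.sub hWpsd.1) fun x => ?_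
    simpa using hform x
  refine ⟨hgpsd, ?_⟩
  have hZsub : (Z - (Z - W)).PosSemidef := by rw [sub_sub_cancel]; exact hWpsd
  have hmono : ‖riccatiStep τ Q A R B P‖ ≤ ‖Z‖ := by
    rw [hId1]
    exact norm_le_norm_of_psd_le (hId1 ▸ hgpsd) hZsub
  refine hmono.trans ?_
  have hnL : ‖L‖ ≤ 1 + τ * ‖A‖ := by
    rw [hL]
    refine (norm_add_le _ _).trans ?_
    have h1 : ‖(1 : Matrix (Fin n) (Fin n) ℝ)‖ ≤ 1 := by
      rw [cstar_norm_def, _root_.map_one]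
      exact ContinuousLinearMap.norm_id_le
    have h2 : ‖τ • A‖ = τ * ‖A‖ := by
      rw [norm_smul, Real.norm_eq_abs, abs_of_pos hτ]
    linarith
  have hnLt : ‖Lᵀ‖ = ‖L‖ := by
    rw [← conjTranspose_eq_transpose_of_trivial, l2_opNorm_conjTranspose]
  have hZle : ‖Z‖ ≤ ‖τ • Q‖ + ‖Lᵀ * P * L‖ := norm_add_le _ _
  have hQs : ‖τ • Q‖ = τ * ‖Q‖ := by
    rw [norm_smul, Real.norm_eq_abs, abs_of_pos hτ]
  have hLPL : ‖Lᵀ * P * L‖ ≤ ‖L‖ * ‖P‖ * ‖L‖ := by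
    calc ‖Lᵀ * P * L‖ ≤ ‖Lᵀ * P‖ * ‖L‖ := l2_opNorm_mul _ _
      _ ≤ ‖Lᵀ‖ * ‖P‖ * ‖L‖ := by
          have := l2_opNorm_mul Lᵀ P
          have h0 : (0:ℝ) ≤ ‖L‖ := norm_nonneg _
          nlinarith
      _ = ‖L‖ * ‖P‖ * ‖L‖ := by rw [hnLt]
  have hP0 : (0:ℝ) ≤ ‖P‖ := norm_nonneg _
  have hL0 : (0:ℝ) ≤ ‖L‖ := norm_nonneg _
  have hA0 : (0:ℝ) ≤ ‖A‖ := norm_nonneg _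
  have hL2 : ‖L‖ * ‖L‖ ≤ (1 + τ * ‖A‖) ^ 2 := by nlinarith
  have hfin : ‖L‖ * ‖P‖ * ‖L‖ ≤ (1 + τ * ‖A‖) ^ 2 * ‖P‖ := by
    nlinarith [mul_le_mul_of_nonneg_right hL2 hP0]
  linarith [hZle, hLPL]

end Helpers

section Main
open scoped Matrix.Norms.L2Operator

/-- Solutions of the backward Riccati difference equation `P_N = 0`,
`P_i = Γ(P_{i+1})` with stepsize `τ = T/N` are bounded uniformly in `N`: there is a constant
`C` depending only on `T`, `‖A‖₂` and `‖Q‖₂` (in particular not on `N`, `R` or `B`) such that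
`‖P_i‖₂ ≤ C` for all `i = 0, …, N`. -/
theorem riccati_difference_uniform_bound {n : ℕ} (T : ℝ) (hT : 0 < T)
    (A Q : Matrix (Fin n) (Fin n) ℝ) (hQ : Q.PosDef) :
    ∃ C : ℝ, ∀ (d : ℕ) (R : Matrix (Fin d) (Fin d) ℝ) (B : Matrix (Fin n) (Fin d) ℝ),
      R.PosDef → ∀ (N : ℕ), 0 < N → ∀ P : ℕ → Matrix (Fin n) (Fin n) ℝ,
        P N = 0 → (∀ i < N, P i = riccatiStep (T / N) Q A R B (P (i + 1))) →
        ∀ i ≤ N, sNorm (P i) ≤ C := by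
  refine ⟨T * sNorm Q * Real.exp (2 * T * sNorm A), ?_⟩
  intro d R B hR N hN P hPN hrec i hi
  simp only [sNorm_eq_norm]
  have hNpos : (0:ℝ) < N := Nat.cast_pos.2 hN
  set τ : ℝ := T / N with hτdef
  have hτ : 0 < τ := div_pos hT hNpos
  set a : ℝ := τ * ‖Q‖ with ha
  set b : ℝ := (1 + τ * ‖A‖) ^ 2 with hb
  have hA0 : (0:ℝ) ≤ ‖A‖ := norm_nonneg _
  have hQ0 : (0:ℝ) ≤ ‖Q‖ := norm_nonneg _
  have hτA : (0:ℝ) ≤ τ * ‖A‖ := mul_nonneg hτ.le hA0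
  have ha0 : 0 ≤ a := mul_nonneg hτ.le hQ0
  have hb1 : 1 ≤ b := by nlinarith
  have hb0 : 0 ≤ b := by linarith
  have main : ∀ k, k ≤ N → (P (N - k)).PosSemidef ∧ ‖P (N - k)‖ ≤ a * k * b ^ k := by
    intro k
    induction k with
    | zero =>
      intro _
      refine ⟨by simpa [hPN] using Matrix.PosSemidef.zero, by simp [hPN]⟩
    | succ k ih =>
      intro hk
      obtain ⟨hpsd, hbound⟩ := ih (by omega)
      have h1 : N - (k+1) < N := by omega
      have h2 : N - (k+1) + 1 = N - k := by omega
      have hstep := hrec _ h1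
      rw [h2] at hstep
      obtain ⟨hg, hgb⟩ := riccati_psd_and_bound hτ hQ.posSemidef hR hpsd
      rw [hstep]
      refine ⟨hg, hgb.trans ?_⟩
      have hbk : (1:ℝ) ≤ b ^ (k+1) := one_le_pow₀ hb1
      have hpk : (0:ℝ) ≤ b ^ k := pow_nonneg hb0 k
      have hsucc : b ^ (k+1) = b ^ k * b := pow_succ b k
      push_cast
      have hx := mul_le_mul_of_nonneg_left hbound hb0
      calc τ * ‖Q‖ + (1 + τ * ‖A‖) ^ 2 * ‖P (N - k)‖ = a + b * ‖P (N - k)‖ := by rw [ha, hb]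
        _ ≤ a + b * (a * ↑k * b ^ k) := by linarith
        _ ≤ a * (↑k + 1) * b ^ (k + 1) := by
            rw [hsucc]
            have h9 : a * 1 ≤ a * (b ^ k * b) := by
              rw [← hsucc]; exact mul_le_mul_of_nonneg_left hbk ha0
            nlinarith [pow_nonneg hb0 k, Nat.cast_nonneg (α := ℝ) k]
  obtain ⟨_, hbound⟩ := main (N - i) (by omega)
  rw [(by omega : N - (N - i) = i)] at hbound
  have hk1 : ((N - i : ℕ) : ℝ) ≤ (N : ℝ) := by
    exact_mod_cast Nat.cast_le.2 (Nat.sub_le N i)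
  have hk2 : b ^ (N - i) ≤ b ^ N := pow_le_pow_right₀ hb1 (Nat.sub_le N i)
  have hk0 : (0:ℝ) ≤ ((N - i : ℕ) : ℝ) := Nat.cast_nonneg _
  have hbNi : (0:ℝ) ≤ b ^ (N - i) := pow_nonneg hb0 _
  have hbN : (0:ℝ) ≤ b ^ N := pow_nonneg hb0 _
  have step1 : a * ((N - i : ℕ) : ℝ) * b ^ (N - i) ≤ a * (N : ℝ) * b ^ N := by
    calc a * ((N - i : ℕ) : ℝ) * b ^ (N - i) ≤ a * (N : ℝ) * b ^ (N - i) := by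
          exact mul_le_mul_of_nonneg_right (mul_le_mul_of_nonneg_left hk1 ha0) hbNi
      _ ≤ a * (N : ℝ) * b ^ N := by
          exact mul_le_mul_of_nonneg_left hk2 (mul_nonneg ha0 (le_of_lt hNpos))
  have haN : a * (N : ℝ) = T * ‖Q‖ := by
    rw [ha, hτdef]
    field_simp
  have hexp : b ^ N ≤ Real.exp (2 * T * ‖A‖) := by
    have h3 : b ^ N = (1 + τ * ‖A‖) ^ (2 * N) := by
      rw [hb, ← pow_mul]
    have h4 : 1 + τ * ‖A‖ ≤ Real.exp (τ * ‖A‖) := by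
      have := Real.add_one_le_exp (τ * ‖A‖)
      linarith
    have h5 : (1 + τ * ‖A‖) ^ (2 * N) ≤ Real.exp (τ * ‖A‖) ^ (2 * N) :=
      pow_le_pow_left₀ (by linarith) h4 _
    have hNne : (N:ℝ) ≠ 0 := hNpos.ne'
    have h6 : Real.exp (τ * ‖A‖) ^ (2 * N) = Real.exp (2 * T * ‖A‖) := by
      rw [← Real.exp_nat_mul]
      congr 1
      rw [hτdef]
      push_cast
      field_simp
    rw [h3]
    linarith [h5, h6.le]
  calc ‖P i‖ ≤ a * ((N - i : ℕ) : ℝ) * b ^ (N - i) := hbound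
    _ ≤ a * (N : ℝ) * b ^ N := step1
    _ = T * ‖Q‖ * b ^ N := by rw [haN]
    _ ≤ T * ‖Q‖ * Real.exp (2 * T * ‖A‖) := by
        have : (0:ℝ) ≤ T * ‖Q‖ := mul_nonneg hT.le hQ0
        nlinarith
end Main
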